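/- arXiv:2010.10114 — 5 statements merged into one kernel-verified Lean document; each statement's English description precedes it below -/
import Mathlib

section
/- In the braid group Br₃, the kernel of the homomorphism ρ : Br₃ → Sym₃ equals the normal closure of the set {a², b²}: ker ρ is the smallest normal subgroup of Br₃ containing a² and b². Equivalently, the quotient of Br₃ by the normal subgroup generated by a² and b² is isomorphic to the symmetric group Sym₃ via the map induced by ρ. -/
/-- The single braid relation `a·b·a·(b·a·b)⁻¹` on two generators. -/
def braidRels : Set (FreeGroup (Fin 2)) :=
  {FreeGroup.of 0 * FreeGroup.of 1 * FreeGroup.of 0 *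
    (FreeGroup.of 1 * FreeGroup.of 0 * FreeGroup.of 1)⁻¹}

/-- The braid group on three strings, `Br₃ = ⟨a, b | a·b·a = b·a·b⟩`. -/
abbrev Br3 : Type := PresentedGroup braidRels

/-- The first generator `a` of `Br₃`. -/
def braidA : Br3 := PresentedGroup.of 0

/-- The second generator `b` of `Br₃`. -/
def braidB : Br3 := PresentedGroup.of 1

/-- The images `σ = (swap 0 1, swap 1 2)` of the generators in `Sym₃`. -/
def braidSigma : Fin 2 → Equiv.Perm (Fin 3) := ![Equiv.swap 0 1, Equiv.swap 1 2]

theorem braidRels_hold : ∀ r ∈ braidRels, FreeGroup.lift braidSigma r = 1 := by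
  intro r hr
  rw [braidRels, Set.mem_singleton_iff] at hr
  subst hr
  simp only [map_mul, map_inv, FreeGroup.lift_apply_of, braidSigma, Matrix.cons_val_zero,
    Matrix.cons_val_one, Matrix.head_cons]
  decide

/-- The natural homomorphism `ρ : Br₃ → Sym₃` sending `a ↦ (0 1)` and `b ↦ (1 2)`. -/
def braidRho : Br3 →* Equiv.Perm (Fin 3) := PresentedGroup.toGroup braidRels_hold

lemma braidRho_A : braidRho braidA = Equiv.swap 0 1 := by
  simp [braidRho, braidA, braidSigma, PresentedGroup.toGroup.of]

lemma braidRho_B : braidRho braidB = Equiv.swap 1 2 := by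
  simp [braidRho, braidB, braidSigma, PresentedGroup.toGroup.of]

lemma braid_rel : braidA * braidB * braidA = braidB * braidA * braidB := by
  have h : PresentedGroup.mk braidRels (FreeGroup.of 0 * FreeGroup.of 1 * FreeGroup.of 0 *
      (FreeGroup.of 1 * FreeGroup.of 0 * FreeGroup.of 1)⁻¹) = 1 := by
    apply (QuotientGroup.eq_one_iff _).mpr
    exact Subgroup.subset_normalClosure rfl
  simp only [map_mul, map_inv] at h
  have := mul_inv_eq_one.mp h
  exact this

lemma braidRho_surjective : Function.Surjective braidRho := by
  intro σ
  have h := Equiv.Perm.mclosure_swap_castSucc_succ 2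
  have hσ : σ ∈ Submonoid.closure (Set.range fun i : Fin 2 =>
      Equiv.swap i.castSucc i.succ) := by rw [h]; trivial
  have hle : Submonoid.closure (Set.range fun i : Fin 2 =>
      Equiv.swap i.castSucc i.succ) ≤ MonoidHom.mrange braidRho := by
    rw [Submonoid.closure_le]
    rintro _ ⟨i, rfl⟩
    fin_cases i
    · exact ⟨braidA, by rw [braidRho_A]; decide⟩
    · exact ⟨braidB, by rw [braidRho_B]; decide⟩
  exact hle hσ

/-- The pure braid group `PBr₃ = ker ρ` is the normal closure of `{a², b²}` in `Br₃`. -/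
theorem ker_rho_eq_normalClosure :
    braidRho.ker = Subgroup.normalClosure {braidA ^ 2, braidB ^ 2} := by
  set N := Subgroup.normalClosure {braidA ^ 2, braidB ^ 2} with hN
  have hNker : N ≤ braidRho.ker := by
    apply Subgroup.normalClosure_le_normal
    rintro g (rfl | rfl)
    · simp [MonoidHom.mem_ker, map_pow, braidRho_A, pow_two]
    · simp [MonoidHom.mem_ker, map_pow, braidRho_B, pow_two]
  refine le_antisymm ?_ hNker
  -- work in the quotient Q = Br3 / N
  set π : Br3 →* Br3 ⧸ N := QuotientGroup.mk' N with hπ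
  set x : Br3 ⧸ N := π braidA with hxdef
  set y : Br3 ⧸ N := π braidB with hydef
  have hA2 : braidA ^ 2 ∈ N := Subgroup.subset_normalClosure (by left; rfl)
  have hB2 : braidB ^ 2 ∈ N := Subgroup.subset_normalClosure (by right; rfl)
  have hx : x * x = 1 := by
    rw [hxdef, ← map_mul, ← pow_two]
    exact (QuotientGroup.eq_one_iff _).mpr hA2
  have hy : y * y = 1 := by
    rw [hydef, ← map_mul, ← pow_two]
    exact (QuotientGroup.eq_one_iff _).mpr hB2
  have hxyx : x * y * x = y * x * y := by
    rw [hxdef, hydef, ← map_mul, ← map_mul, ← map_mul, ← map_mul, braid_rel]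
  have hxyx2 : x * (y * x) = y * (x * y) := by
    simpa [mul_assoc] using hxyx
  have hx' : ∀ m : Br3 ⧸ N, x * (x * m) = m := fun m => by
    rw [← mul_assoc, hx, one_mul]
  have hy' : ∀ m : Br3 ⧸ N, y * (y * m) = m := fun m => by
    rw [← mul_assoc, hy, one_mul]
  -- every element of the quotient lies in a 6-element set
  set T : Set (Br3 ⧸ N) := {1, x, y, x * y, y * x, x * (y * x)} with hT
  have mem1 : (1 : Br3 ⧸ N) ∈ T := by left; rfl
  have memx : x ∈ T := by right; left; rfl
  have memy : y ∈ T := by right; right; left; rfl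
  have memxy : x * y ∈ T := by right; right; right; left; rfl
  have memyx : y * x ∈ T := by right; right; right; right; left; rfl
  have memxyx : x * (y * x) ∈ T := by right; right; right; right; right; rfl
  have hxT : ∀ q ∈ T, x * q ∈ T := by
    rintro q (rfl | rfl | rfl | rfl | rfl | rfl)
    · rw [mul_one]; exact memx
    · rw [hx]; exact mem1
    · exact memxy
    · rw [hx' y]; exact memy
    · exact memxyx
    · rw [hx' (y * x)]; exact memyx
  have hyT : ∀ q ∈ T, y * q ∈ T := by
    rintro q (rfl | rfl | rfl | rfl | rfl | rfl)
    · rw [mul_one]; exact memy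
    · exact memyx
    · rw [hy]; exact mem1
    · rw [← hxyx2]; exact memxyx
    · rw [hy' x]; exact memx
    · rw [hxyx2, hy' (x * y)]; exact memxy
  have hall : ∀ q : Br3 ⧸ N, q ∈ T := by
    have hclos : Subgroup.closure ({x, y} : Set (Br3 ⧸ N)) = ⊤ := by
      rw [eq_top_iff]
      intro q _
      obtain ⟨g, rfl⟩ := QuotientGroup.mk'_surjective N q
      have hg : g ∈ Subgroup.comap π (Subgroup.closure ({x, y} : Set (Br3 ⧸ N))) := by
        apply PresentedGroup.generated_by
        intro j
        fin_cases j
        · exact Subgroup.subset_closure (by left; rfl)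
        · exact Subgroup.subset_closure (by right; rfl)
      exact hg
    intro q
    have hq : q ∈ Subgroup.closure ({x, y} : Set (Br3 ⧸ N)) := by rw [hclos]; trivial
    induction hq using Subgroup.closure_induction_left with
    | one => exact mem1
    | mul_left z hz w _ hw =>
      rcases hz with rfl | rfl
      · exact hxT w hw
      · exact hyT w hw
    | inv_mul_cancel z hz w _ hw =>
      rcases hz with rfl | rfl
      · rw [inv_eq_of_mul_eq_one_left hx]; exact hxT w hw
      · rw [inv_eq_of_mul_eq_one_left hy]; exact hyT w hw
  -- surjection from Fin 6 onto the quotient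
  have hsurj6 : Function.Surjective
      (![1, x, y, x * y, y * x, x * (y * x)] : Fin 6 → Br3 ⧸ N) := by
    intro q
    rcases hall q with rfl | rfl | rfl | rfl | rfl | rfl
    · exact ⟨0, rfl⟩
    · exact ⟨1, rfl⟩
    · exact ⟨2, rfl⟩
    · exact ⟨3, rfl⟩
    · exact ⟨4, rfl⟩
    · exact ⟨5, rfl⟩
  have hfin : Finite (Br3 ⧸ N) := Finite.of_surjective _ hsurj6
  have hcard6 : Nat.card (Br3 ⧸ N) ≤ 6 := by
    have := Nat.card_le_card_of_surjective _ hsurj6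
    simpa using this
  -- the induced map to Sym₃
  set ρ' : Br3 ⧸ N →* Equiv.Perm (Fin 3) :=
    QuotientGroup.lift N braidRho (fun g hg => hNker hg) with hρ'
  have hρ'surj : Function.Surjective ρ' := by
    intro σ
    obtain ⟨g, rfl⟩ := braidRho_surjective σ
    exact ⟨π g, rfl⟩
  have hcardS : Nat.card (Equiv.Perm (Fin 3)) = 6 := by
    rw [Nat.card_eq_fintype_card, Fintype.card_perm, Fintype.card_fin]
    decide
  have hbij : Function.Bijective ρ' := by
    rw [Nat.bijective_iff_surjective_and_card]
    refine ⟨hρ'surj, ?_⟩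
    have h1 : 6 ≤ Nat.card (Br3 ⧸ N) := by
      rw [← hcardS]; exact Nat.card_le_card_of_surjective _ hρ'surj
    omega
  intro g hg
  have h1 : ρ' (π g) = 1 := hg
  have hπg : π g = 1 := by
    apply hbij.injective
    rw [h1, map_one]
  exact (QuotientGroup.eq_one_iff g).mp hπg
end

section
/- The pure braid group PBr₃ = ker ρ equals the subgroup of Br₃ generated (as a subgroup, i.e. Subgroup.closure) by the three elements a², b², and (a·b·a)². -/
namespace BraidAux

open Subgroup

local notation "A" => braidA
local notation "B" => braidB

lemma braid_rel : braidA * braidB * braidA = braidB * braidA * braidB := by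
  have h : PresentedGroup.mk braidRels (FreeGroup.of 0 * FreeGroup.of 1 * FreeGroup.of 0 *
      (FreeGroup.of 1 * FreeGroup.of 0 * FreeGroup.of 1)⁻¹) = 1 := by
    apply (QuotientGroup.eq_one_iff _).2
    exact Subgroup.subset_normalClosure rfl
  simp only [map_mul, map_inv] at h
  have := mul_eq_one_iff_eq_inv.mp h
  simpa [braidA, braidB, PresentedGroup.of] using this

def Sgen : Set Br3 := {braidA ^ 2, braidB ^ 2, (braidA * braidB * braidA) ^ 2}
def Hsub : Subgroup Br3 := Subgroup.closure Sgen

lemma hxH : A*A ∈ Hsub := by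
  rw [← pow_two]; exact subset_closure (Or.inl rfl)
lemma hyH : B*B ∈ Hsub := by
  rw [← pow_two]; exact subset_closure (Or.inr (Or.inl rfl))
lemma hcH : (A*B*A)*(A*B*A) ∈ Hsub := by
  rw [← pow_two]; exact subset_closure (Or.inr (Or.inr rfl))

lemma hd1 : (A*B*A)*A = B*(A*B*A) := by
  calc (A*B*A)*A = (B*A*B)*A := by rw [braid_rel]
  _ = B*(A*B*A) := by group

lemma hd2 : (A*B*A)*B = A*(A*B*A) := by
  calc (A*B*A)*B = A*(B*A*B) := by group
  _ = A*(A*B*A) := by rw [← braid_rel]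

lemma hca : ((A*B*A)*(A*B*A))*A = A*((A*B*A)*(A*B*A)) := by
  calc ((A*B*A)*(A*B*A))*A = (A*B*A)*((A*B*A)*A) := by group
  _ = (A*B*A)*(B*(A*B*A)) := by rw [hd1]
  _ = ((A*B*A)*B)*(A*B*A) := by group
  _ = (A*(A*B*A))*(A*B*A) := by rw [hd2]
  _ = A*((A*B*A)*(A*B*A)) := by group

lemma hcb : ((A*B*A)*(A*B*A))*B = B*((A*B*A)*(A*B*A)) := by
  calc ((A*B*A)*(A*B*A))*B = (A*B*A)*((A*B*A)*B) := by group
  _ = (A*B*A)*(A*(A*B*A)) := by rw [hd2]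
  _ = ((A*B*A)*A)*(A*B*A) := by group
  _ = (B*(A*B*A))*(A*B*A) := by rw [hd1]
  _ = B*((A*B*A)*(A*B*A)) := by group

lemma key1 : (A*A)*B*((A*A)*B) = (A*B*A)*(A*B*A) := by
  calc (A*A)*B*((A*A)*B) = A*((A*B*A)*(A*B)) := by group
  _ = A*((B*A*B)*(A*B)) := by rw [braid_rel]
  _ = (A*B*A)*(B*A*B) := by group
  _ = (A*B*A)*(A*B*A) := by rw [← braid_rel]

lemma key2 : (B*B)*A*((B*B)*A) = (A*B*A)*(A*B*A) := by
  calc (B*B)*A*((B*B)*A) = B*((B*A*B)*(B*A)) := by group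
  _ = B*((A*B*A)*(B*A)) := by rw [← braid_rel]
  _ = (B*A*B)*(A*B*A) := by group
  _ = (A*B*A)*(A*B*A) := by rw [← braid_rel]

lemma cAy : A*(B*B)*A⁻¹ = (B*B)⁻¹*((A*B*A)*(A*B*A))*(A*A)⁻¹ := by
  calc A*(B*B)*A⁻¹ = (B*B)⁻¹*((B*B)*A*((B*B)*A))*(A*A)⁻¹ := by group
  _ = (B*B)⁻¹*((A*B*A)*(A*B*A))*(A*A)⁻¹ := by rw [key2]

lemma cA'y : A⁻¹*(B*B)*A = ((A*B*A)*(A*B*A))*(A*A)⁻¹*(B*B)⁻¹ := by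
  have swap2 : A*((B*B)*A*((B*B)*A)) = ((B*B)*A*((B*B)*A))*A := by
    rw [key2]; exact hca.symm
  calc A⁻¹*(B*B)*A = A⁻¹*(((B*B)*A*((B*B)*A))*A)*(A*A)⁻¹*(B*B)⁻¹ := by group
  _ = A⁻¹*(A*((B*B)*A*((B*B)*A)))*(A*A)⁻¹*(B*B)⁻¹ := by rw [← swap2]
  _ = ((B*B)*A*((B*B)*A))*(A*A)⁻¹*(B*B)⁻¹ := by group
  _ = ((A*B*A)*(A*B*A))*(A*A)⁻¹*(B*B)⁻¹ := by rw [key2]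

lemma cBx : B*(A*A)*B⁻¹ = (A*A)⁻¹*((A*B*A)*(A*B*A))*(B*B)⁻¹ := by
  calc B*(A*A)*B⁻¹ = (A*A)⁻¹*((A*A)*B*((A*A)*B))*(B*B)⁻¹ := by group
  _ = (A*A)⁻¹*((A*B*A)*(A*B*A))*(B*B)⁻¹ := by rw [key1]

lemma cB'x : B⁻¹*(A*A)*B = ((A*B*A)*(A*B*A))*(B*B)⁻¹*(A*A)⁻¹ := by
  have swap1 : B*((A*A)*B*((A*A)*B)) = ((A*A)*B*((A*A)*B))*B := by
    rw [key1]; exact hcb.symm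
  calc B⁻¹*(A*A)*B = B⁻¹*(((A*A)*B*((A*A)*B))*B)*(B*B)⁻¹*(A*A)⁻¹ := by group
  _ = B⁻¹*(B*((A*A)*B*((A*A)*B)))*(B*B)⁻¹*(A*A)⁻¹ := by rw [← swap1]
  _ = ((A*A)*B*((A*A)*B))*(B*B)⁻¹*(A*A)⁻¹ := by group
  _ = ((A*B*A)*(A*B*A))*(B*B)⁻¹*(A*A)⁻¹ := by rw [key1]

lemma cAc : A*((A*B*A)*(A*B*A))*A⁻¹ = (A*B*A)*(A*B*A) := by
  calc A*((A*B*A)*(A*B*A))*A⁻¹ = (A*((A*B*A)*(A*B*A)))*A⁻¹ := by group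
  _ = (((A*B*A)*(A*B*A))*A)*A⁻¹ := by rw [← hca]
  _ = (A*B*A)*(A*B*A) := by group

lemma cA'c : A⁻¹*((A*B*A)*(A*B*A))*A = (A*B*A)*(A*B*A) := by
  calc A⁻¹*((A*B*A)*(A*B*A))*A = A⁻¹*(((A*B*A)*(A*B*A))*A) := by group
  _ = A⁻¹*(A*((A*B*A)*(A*B*A))) := by rw [hca]
  _ = (A*B*A)*(A*B*A) := by group

lemma cBc : B*((A*B*A)*(A*B*A))*B⁻¹ = (A*B*A)*(A*B*A) := by
  calc B*((A*B*A)*(A*B*A))*B⁻¹ = (B*((A*B*A)*(A*B*A)))*B⁻¹ := by group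
  _ = (((A*B*A)*(A*B*A))*B)*B⁻¹ := by rw [← hcb]
  _ = (A*B*A)*(A*B*A) := by group

lemma cB'c : B⁻¹*((A*B*A)*(A*B*A))*B = (A*B*A)*(A*B*A) := by
  calc B⁻¹*((A*B*A)*(A*B*A))*B = B⁻¹*(((A*B*A)*(A*B*A))*B) := by group
  _ = B⁻¹*(B*((A*B*A)*(A*B*A))) := by rw [hcb]
  _ = (A*B*A)*(A*B*A) := by group

lemma conj_mem (u : Br3) (h1 : u*(A*A)*u⁻¹ ∈ Hsub) (h2 : u*(B*B)*u⁻¹ ∈ Hsub)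
    (h3 : u*((A*B*A)*(A*B*A))*u⁻¹ ∈ Hsub) : ∀ m ∈ Hsub, u*m*u⁻¹ ∈ Hsub := by
  intro m hm
  refine Subgroup.closure_induction (p := fun g _ => u*g*u⁻¹ ∈ Hsub) ?_ ?_ ?_ ?_ hm
  · rintro g hg
    simp only [Sgen, Set.mem_insert_iff, Set.mem_singleton_iff] at hg
    rcases hg with rfl | rfl | rfl
    · rw [pow_two]; exact h1
    · rw [pow_two]; exact h2
    · rw [pow_two]; exact h3
  · simpa using one_mem Hsub
  · intro g h _ _ pg ph
    have e : u*(g*h)*u⁻¹ = (u*g*u⁻¹)*(u*h*u⁻¹) := by group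
    rw [e]; exact mul_mem pg ph
  · intro g _ pg
    have e : u*g⁻¹*u⁻¹ = (u*g*u⁻¹)⁻¹ := by group
    rw [e]; exact inv_mem pg

lemma conjA : ∀ m ∈ Hsub, A*m*A⁻¹ ∈ Hsub := by
  refine conj_mem _ ?_ ?_ ?_
  · have e : A*(A*A)*A⁻¹ = A*A := by group
    rw [e]; exact hxH
  · rw [cAy]; exact mul_mem (mul_mem (inv_mem hyH) hcH) (inv_mem hxH)
  · rw [cAc]; exact hcH

lemma conjA' : ∀ m ∈ Hsub, A⁻¹*m*A ∈ Hsub := by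
  have base : ∀ m ∈ Hsub, A⁻¹*m*(A⁻¹)⁻¹ ∈ Hsub := by
    refine conj_mem _ ?_ ?_ ?_
    · have e : A⁻¹*(A*A)*(A⁻¹)⁻¹ = A*A := by group
      rw [e]; exact hxH
    · have e : A⁻¹*(B*B)*(A⁻¹)⁻¹ = A⁻¹*(B*B)*A := by group
      rw [e, cA'y]; exact mul_mem (mul_mem hcH (inv_mem hxH)) (inv_mem hyH)
    · have e : A⁻¹*((A*B*A)*(A*B*A))*(A⁻¹)⁻¹ = A⁻¹*((A*B*A)*(A*B*A))*A := by group
      rw [e, cA'c]; exact hcH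
  intro m hm
  have := base m hm
  simpa using this

lemma conjB : ∀ m ∈ Hsub, B*m*B⁻¹ ∈ Hsub := by
  refine conj_mem _ ?_ ?_ ?_
  · rw [cBx]; exact mul_mem (mul_mem (inv_mem hxH) hcH) (inv_mem hyH)
  · have e : B*(B*B)*B⁻¹ = B*B := by group
    rw [e]; exact hyH
  · rw [cBc]; exact hcH

lemma conjB' : ∀ m ∈ Hsub, B⁻¹*m*B ∈ Hsub := by
  have base : ∀ m ∈ Hsub, B⁻¹*m*(B⁻¹)⁻¹ ∈ Hsub := by
    refine conj_mem _ ?_ ?_ ?_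
    · have e : B⁻¹*(A*A)*(B⁻¹)⁻¹ = B⁻¹*(A*A)*B := by group
      rw [e, cB'x]; exact mul_mem (mul_mem hcH (inv_mem hyH)) (inv_mem hxH)
    · have e : B⁻¹*(B*B)*(B⁻¹)⁻¹ = B*B := by group
      rw [e]; exact hyH
    · have e : B⁻¹*((A*B*A)*(A*B*A))*(B⁻¹)⁻¹ = B⁻¹*((A*B*A)*(A*B*A))*B := by group
      rw [e, cB'c]; exact hcH
  intro m hm
  have := base m hm
  simpa using this

instance normalH : Hsub.Normal := by
  constructor
  intro n hn g
  have hg : g ∈ Subgroup.closure (Set.range (PresentedGroup.of : Fin 2 → Br3)) := by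
    rw [PresentedGroup.closure_range_of]; trivial
  refine Subgroup.closure_induction_left
    (p := fun g _ => ∀ n ∈ Hsub, g*n*g⁻¹ ∈ Hsub) ?_ ?_ ?_ hg n hn
  · intro n hn; simpa using hn
  · rintro x ⟨i, rfl⟩ y _ ih n hn
    have e : (PresentedGroup.of i * y)*n*(PresentedGroup.of i * y)⁻¹
        = PresentedGroup.of i * (y*n*y⁻¹) * (PresentedGroup.of i)⁻¹ := by group
    rw [e]
    fin_cases i
    · exact conjA _ (ih n hn)
    · exact conjB _ (ih n hn)
  · rintro x ⟨i, rfl⟩ y _ ih n hn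
    have e : ((PresentedGroup.of i)⁻¹ * y)*n*((PresentedGroup.of i)⁻¹ * y)⁻¹
        = (PresentedGroup.of i)⁻¹ * (y*n*y⁻¹) * ((PresentedGroup.of i)⁻¹)⁻¹ := by group
    rw [e]
    fin_cases i
    · rw [inv_inv]; exact conjA' _ (ih n hn)
    · rw [inv_inv]; exact conjB' _ (ih n hn)

end BraidAux

namespace BraidAux

abbrev π : Br3 →* Br3 ⧸ Hsub := QuotientGroup.mk' Hsub

lemma qa : π braidA * π braidA = 1 := by
  rw [← map_mul]
  exact (QuotientGroup.eq_one_iff _).2 hxH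

lemma qb : π braidB * π braidB = 1 := by
  rw [← map_mul]
  exact (QuotientGroup.eq_one_iff _).2 hyH

lemma qrel : π braidA * π braidB * π braidA = π braidB * π braidA * π braidB := by
  rw [← map_mul, ← map_mul, ← map_mul, ← map_mul, braid_rel]

def T : Set (Br3 ⧸ Hsub) :=
  {1, π braidA, π braidB, π braidA * π braidB, π braidB * π braidA,
    π braidA * π braidB * π braidA}

lemma mem_T {t : Br3 ⧸ Hsub} (h : t = 1 ∨ t = π braidA ∨ t = π braidB ∨
    t = π braidA * π braidB ∨ t = π braidB * π braidA ∨
    t = π braidA * π braidB * π braidA) : t ∈ T := by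
  simpa [T, Set.mem_insert_iff, Set.mem_singleton_iff] using h

lemma T_cases {t : Br3 ⧸ Hsub} (h : t ∈ T) : t = 1 ∨ t = π braidA ∨ t = π braidB ∨
    t = π braidA * π braidB ∨ t = π braidB * π braidA ∨
    t = π braidA * π braidB * π braidA := by
  simpa [T, Set.mem_insert_iff, Set.mem_singleton_iff] using h

lemma mulA : ∀ t ∈ T, t * π braidA ∈ T := by
  intro t ht
  rcases T_cases ht with rfl | rfl | rfl | rfl | rfl | rfl
  · exact mem_T (Or.inr (Or.inl (one_mul _)))
  · exact mem_T (Or.inl qa)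
  · exact mem_T (Or.inr (Or.inr (Or.inr (Or.inr (Or.inl rfl)))))
  · exact mem_T (Or.inr (Or.inr (Or.inr (Or.inr (Or.inr rfl)))))
  · refine mem_T (Or.inr (Or.inr (Or.inl ?_)))
    rw [mul_assoc, qa, mul_one]
  · refine mem_T (Or.inr (Or.inr (Or.inr (Or.inl ?_))))
    rw [mul_assoc, qa, mul_one]

lemma mulB : ∀ t ∈ T, t * π braidB ∈ T := by
  intro t ht
  rcases T_cases ht with rfl | rfl | rfl | rfl | rfl | rfl
  · exact mem_T (Or.inr (Or.inr (Or.inl (one_mul _))))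
  · exact mem_T (Or.inr (Or.inr (Or.inr (Or.inl rfl))))
  · exact mem_T (Or.inl qb)
  · refine mem_T (Or.inr (Or.inl ?_))
    rw [mul_assoc, qb, mul_one]
  · exact mem_T (Or.inr (Or.inr (Or.inr (Or.inr (Or.inr qrel.symm)))))
  · refine mem_T (Or.inr (Or.inr (Or.inr (Or.inr (Or.inl ?_)))))
    rw [qrel, mul_assoc, qb, mul_one]

lemma invA : (π braidA)⁻¹ = π braidA := inv_eq_of_mul_eq_one_right qa
lemma invB : (π braidB)⁻¹ = π braidB := inv_eq_of_mul_eq_one_right qb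

lemma main : ∀ g : Br3, π g ∈ T := by
  intro g
  have hg : g ∈ Subgroup.closure (Set.range (PresentedGroup.of : Fin 2 → Br3)) := by
    rw [PresentedGroup.closure_range_of]; trivial
  refine Subgroup.closure_induction_right (p := fun g _ => π g ∈ T) ?_ ?_ ?_ hg
  · show π (1:Br3) ∈ T
    rw [map_one]; exact mem_T (Or.inl rfl)
  · rintro w _ s ⟨i, rfl⟩ ih
    rw [map_mul]
    fin_cases i
    · exact mulA _ ih
    · exact mulB _ ih
  · rintro w _ s ⟨i, rfl⟩ ih
    rw [map_mul, map_inv]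
    fin_cases i
    · show π w * (π braidA)⁻¹ ∈ T
      rw [invA]; exact mulA _ ih
    · show π w * (π braidB)⁻¹ ∈ T
      rw [invB]; exact mulB _ ih

lemma rA : braidRho braidA = Equiv.swap 0 1 := by
  rw [braidRho, braidA, PresentedGroup.toGroup.of]; rfl

lemma rB : braidRho braidB = Equiv.swap 1 2 := by
  rw [braidRho, braidB, PresentedGroup.toGroup.of]; rfl

lemma hHker : Hsub ≤ braidRho.ker := by
  refine (Subgroup.closure_le _).2 ?_
  rintro g hg
  simp only [Sgen, Set.mem_insert_iff, Set.mem_singleton_iff] at hg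
  rcases hg with rfl | rfl | rfl <;>
    · simp only [SetLike.mem_coe, MonoidHom.mem_ker, map_pow, map_mul, rA, rB]
      decide

end BraidAux


/-- The pure braid group `PBr₃ = ker ρ` equals the subgroup of `Br₃` generated by the
three elements `a²`, `b²` and `(a·b·a)²`. -/
theorem ker_rho_eq_closure_second_triple :
    braidRho.ker =
      Subgroup.closure {braidA ^ 2, braidB ^ 2, (braidA * braidB * braidA) ^ 2} := by
  have hset : Subgroup.closure {braidA ^ 2, braidB ^ 2, (braidA * braidB * braidA) ^ 2}
      = BraidAux.Hsub := rfl
  rw [hset]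
  refine le_antisymm ?_ BraidAux.hHker
  intro g hg
  have hρ : braidRho g = 1 := hg
  have key : ∀ t0 : Br3, BraidAux.π g = BraidAux.π t0 → braidRho t0 = 1 := by
    intro t0 h
    obtain ⟨z, hz, hgz⟩ := (QuotientGroup.mk'_eq_mk' BraidAux.Hsub).1 h
    have hz1 : braidRho z = 1 := BraidAux.hHker hz
    rw [← hgz, map_mul, hρ, hz1, one_mul]
  rcases BraidAux.T_cases (BraidAux.main g) with h | h | h | h | h | h
  · exact (QuotientGroup.eq_one_iff g).1 h
  · have := key _ h
    rw [BraidAux.rA] at this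
    exact absurd this (by decide)
  · have := key _ h
    rw [BraidAux.rB] at this
    exact absurd this (by decide)
  · have := key _ h
    rw [map_mul, BraidAux.rA, BraidAux.rB] at this
    exact absurd this (by decide)
  · have := key _ h
    rw [map_mul, BraidAux.rA, BraidAux.rB] at this
    exact absurd this (by decide)
  · have := key _ h
    rw [map_mul, map_mul, BraidAux.rA, BraidAux.rB] at this
    exact absurd this (by decide)
end

section
/- Let K be an algebraically closed field and k ≥ 1. Suppose M = (V₁, V₂, α, β) and N = (W₁, W₂, γ, δ) are finite-dimensional Λ_con-modules such that the only morphism of representations M → N is zero. Then M or N is filtered by a unique simple module; explicitly, at least one of the following holds: V₁ = 0, or V₂ = 0, or W₁ = 0, or W₂ = 0. -/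
/-- A finite-dimensional module over the contraction algebra `Λ_con` (the path algebra of
the two-cycle quiver with arrows `a : 1 → 2`, `b : 2 → 1` modulo `(ab)^k a = 0` and
`b (ab)^k = 0`), given concretely as a representation `(V₁, V₂, α, β)` with
`α ∘ (β ∘ α)^k = 0` and `(β ∘ α)^k ∘ β = 0`. -/
structure LamRep (K : Type) [Field K] (k : ℕ) : Type 1 where
  V1 : Type
  V2 : Type
  [acg1 : AddCommGroup V1]
  [acg2 : AddCommGroup V2]
  [mod1 : Module K V1]
  [mod2 : Module K V2]
  [fd1 : FiniteDimensional K V1]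
  [fd2 : FiniteDimensional K V2]
  α : V1 →ₗ[K] V2
  β : V2 →ₗ[K] V1
  rel1 : α ∘ₗ ((β ∘ₗ α) ^ k) = 0
  rel2 : ((β ∘ₗ α) ^ k) ∘ₗ β = 0

attribute [instance] LamRep.acg1 LamRep.acg2 LamRep.mod1 LamRep.mod2 LamRep.fd1 LamRep.fd2

namespace LamRep

variable {K : Type} [Field K] {k : ℕ}

/-- A morphism of `Λ_con`-modules is a pair of linear maps commuting with the structure
maps. -/
def IsHom (M N : LamRep K k) (φ1 : M.V1 →ₗ[K] N.V1) (φ2 : M.V2 →ₗ[K] N.V2) : Prop :=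
  φ2 ∘ₗ M.α = N.α ∘ₗ φ1 ∧ φ1 ∘ₗ M.β = N.β ∘ₗ φ2

/-- An isomorphism of `Λ_con`-modules is a pair of linear isomorphisms commuting with the
structure maps. -/
def Iso (M N : LamRep K k) : Prop :=
  ∃ (φ1 : M.V1 ≃ₗ[K] N.V1) (φ2 : M.V2 ≃ₗ[K] N.V2),
    M.IsHom N (φ1 : M.V1 →ₗ[K] N.V1) (φ2 : M.V2 →ₗ[K] N.V2)

/-- The zero representation: both underlying vector spaces are trivial. -/
def IsZero (M : LamRep K k) : Prop := Subsingleton M.V1 ∧ Subsingleton M.V2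

theorem prodMap_pow {V W : Type} [AddCommGroup V] [Module K V] [AddCommGroup W] [Module K W]
    (f : V →ₗ[K] V) (g : W →ₗ[K] W) (n : ℕ) :
    (f.prodMap g) ^ n = (f ^ n).prodMap (g ^ n) := by
  induction n with
  | zero => ext <;> simp
  | succ n ih => rw [pow_succ, pow_succ, pow_succ, ih, LinearMap.prodMap_mul]

/-- The direct sum of two representations, taken componentwise. -/
def dsum (M N : LamRep K k) : LamRep K k where
  V1 := M.V1 × N.V1
  V2 := M.V2 × N.V2
  α := M.α.prodMap N.α
  β := M.β.prodMap N.β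
  rel1 := by
    have h : (M.β.prodMap N.β) ∘ₗ (M.α.prodMap N.α) = (M.β ∘ₗ M.α).prodMap (N.β ∘ₗ N.α) :=
      LinearMap.prodMap_comp _ _ _ _
    rw [h, prodMap_pow,
      show (M.α.prodMap N.α) ∘ₗ (((M.β ∘ₗ M.α) ^ k).prodMap ((N.β ∘ₗ N.α) ^ k)) =
        (M.α ∘ₗ ((M.β ∘ₗ M.α) ^ k)).prodMap (N.α ∘ₗ ((N.β ∘ₗ N.α) ^ k)) from
        LinearMap.prodMap_comp _ _ _ _, M.rel1, N.rel1, LinearMap.prodMap_zero]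
  rel2 := by
    have h : (M.β.prodMap N.β) ∘ₗ (M.α.prodMap N.α) = (M.β ∘ₗ M.α).prodMap (N.β ∘ₗ N.α) :=
      LinearMap.prodMap_comp _ _ _ _
    rw [h, prodMap_pow,
      show (((M.β ∘ₗ M.α) ^ k).prodMap ((N.β ∘ₗ N.α) ^ k)) ∘ₗ (M.β.prodMap N.β) =
        (((M.β ∘ₗ M.α) ^ k) ∘ₗ M.β).prodMap (((N.β ∘ₗ N.α) ^ k) ∘ₗ N.β) from
        LinearMap.prodMap_comp _ _ _ _, M.rel2, N.rel2, LinearMap.prodMap_zero]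

/-- A representation is indecomposable if it is nonzero and not isomorphic to a direct sum
of two nonzero representations. -/
def Indecomposable (M : LamRep K k) : Prop :=
  ¬ M.IsZero ∧ ∀ N P : LamRep K k, M.Iso (N.dsum P) → N.IsZero ∨ P.IsZero

/-- The endomorphism space of a representation, as a `K`-subspace of the product of the two
spaces of linear endomorphisms. -/
def endSpace (M : LamRep K k) :
    Submodule K ((M.V1 →ₗ[K] M.V1) × (M.V2 →ₗ[K] M.V2)) where
  carrier := {φ | M.IsHom M φ.1 φ.2}
  zero_mem' := by
    constructor <;> simp [LinearMap.zero_comp, LinearMap.comp_zero]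
  add_mem' := by
    rintro φ ψ ⟨h1, h2⟩ ⟨h3, h4⟩
    constructor
    · simp only [Prod.fst_add, Prod.snd_add, LinearMap.add_comp, LinearMap.comp_add, h1, h3]
    · simp only [Prod.fst_add, Prod.snd_add, LinearMap.add_comp, LinearMap.comp_add, h2, h4]
  smul_mem' := by
    rintro c φ ⟨h1, h2⟩
    constructor
    · simp only [Prod.smul_fst, Prod.smul_snd, LinearMap.smul_comp, LinearMap.comp_smul, h1]
    · simp only [Prod.smul_fst, Prod.smul_snd, LinearMap.smul_comp, LinearMap.comp_smul, h2]


variable (K)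

/-- The simple module `S₁ = (K, 0, 0, 0)`. -/
def S1 : LamRep K k where
  V1 := K
  V2 := PUnit
  α := 0
  β := 0
  rel1 := by rw [LinearMap.zero_comp]
  rel2 := by rw [LinearMap.comp_zero]

/-- The simple module `S₂ = (0, K, 0, 0)`. -/
def S2 : LamRep K k where
  V1 := PUnit
  V2 := K
  α := 0
  β := 0
  rel1 := by rw [LinearMap.zero_comp]
  rel2 := by rw [LinearMap.comp_zero]

/-- The module `M₁ = (K, K, id, 0)` (a representation whenever `k ≥ 1`). -/
def M1 (hk : 1 ≤ k) : LamRep K k where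
  V1 := K
  V2 := K
  α := LinearMap.id
  β := 0
  rel1 := by
    rw [LinearMap.zero_comp, zero_pow (Nat.one_le_iff_ne_zero.mp hk), LinearMap.comp_zero]
  rel2 := by rw [LinearMap.comp_zero]

/-- The module `M₂ = (K, K, 0, id)` (a representation whenever `k ≥ 1`). -/
def M2 (hk : 1 ≤ k) : LamRep K k where
  V1 := K
  V2 := K
  α := 0
  β := LinearMap.id
  rel1 := by rw [LinearMap.zero_comp]
  rel2 := by
    rw [LinearMap.comp_zero, zero_pow (Nat.one_le_iff_ne_zero.mp hk), LinearMap.zero_comp]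

/-- The projective module `Q₁ = (K², K, α(s,t) = s, β(t) = (0,t))` for `k = 1`. -/
def Q1 : LamRep K 1 where
  V1 := K × K
  V2 := K
  α := LinearMap.fst K K K
  β := LinearMap.inr K K K
  rel1 := by ext <;> simp
  rel2 := by ext <;> simp

/-- The projective module `Q₂ = (K, K², α(t) = (0,t), β(s,t) = s)` for `k = 1`. -/
def Q2 : LamRep K 1 where
  V1 := K
  V2 := K × K
  α := LinearMap.inr K K K
  β := LinearMap.fst K K K
  rel1 := by ext <;> simp
  rel2 := by ext <;> simp

end LamRep

section Helpers
variable {K : Type} [Field K]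

lemma exists_dual_comp_eq_zero {V W : Type} [AddCommGroup V] [Module K V]
    [AddCommGroup W] [Module K W] (h : V →ₗ[K] W) (hns : ¬ Function.Surjective h) :
    ∃ f : W →ₗ[K] K, f ≠ 0 ∧ f ∘ₗ h = 0 := by
  have hr : LinearMap.range h ≠ ⊤ := by rwa [Ne, LinearMap.range_eq_top]
  have : Nontrivial (W ⧸ LinearMap.range h) := by
    rw [← not_subsingleton_iff_nontrivial, Submodule.Quotient.subsingleton_iff]
    exact hr
  obtain ⟨x, hx⟩ := exists_ne (0 : W ⧸ LinearMap.range h)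
  have : ¬ ∀ g : Module.Dual K (W ⧸ LinearMap.range h), g x = 0 := by
    rw [Module.forall_dual_apply_eq_zero_iff K x]; exact hx
  push_neg at this
  obtain ⟨g, hg⟩ := this
  refine ⟨g ∘ₗ (LinearMap.range h).mkQ, ?_, ?_⟩
  · obtain ⟨y, hy⟩ := Submodule.mkQ_surjective (LinearMap.range h) x
    intro h0
    have := DFunLike.congr_fun h0 y
    simp [hy] at this
    exact hg this
  · ext v
    have : (LinearMap.range h).mkQ (h v) = 0 := by
      rw [Submodule.mkQ_apply, Submodule.Quotient.mk_eq_zero]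
      exact LinearMap.mem_range_self h v
    simp [this]

lemma not_surjective_of_pow_eq_zero {V : Type} [AddCommGroup V] [Module K V] [Nontrivial V]
    (h : V →ₗ[K] V) {n : ℕ} (hn : h ^ n = 0) : ¬ Function.Surjective h := by
  intro hs
  obtain ⟨x, hx⟩ := exists_ne (0 : V)
  obtain ⟨v, hv⟩ := (hs.iterate n) x
  rw [← Module.End.pow_apply, hn] at hv
  simp at hv
  exact hx hv.symm

lemma exists_ker_of_pow_eq_zero {V : Type} [AddCommGroup V] [Module K V] [Nontrivial V]
    (h : V →ₗ[K] V) {n : ℕ} (hn : h ^ n = 0) : ∃ x, x ≠ 0 ∧ h x = 0 := by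
  by_contra hc
  push_neg at hc
  have hinj : Function.Injective h := by
    rw [← LinearMap.ker_eq_bot, Submodule.eq_bot_iff]
    intro x hx
    by_contra h0
    exact hc x h0 hx
  obtain ⟨x, hx⟩ := exists_ne (0 : V)
  apply hx
  have h2 := hinj.iterate n (a₁ := x) (a₂ := 0)
  simp only [← Module.End.pow_apply, hn] at h2
  apply h2
  simp

lemma comp_pow_succ {V W : Type} [AddCommGroup V] [Module K V] [AddCommGroup W] [Module K W]
    (f : V →ₗ[K] W) (g : W →ₗ[K] V) (n : ℕ) :
    (f ∘ₗ g) ^ (n + 1) = f ∘ₗ (((g ∘ₗ f) ^ n) ∘ₗ g) := by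
  induction n with
  | zero => simp [Module.End.one_eq_id]
  | succ n ih => simp [pow_succ, Module.End.mul_eq_comp, ih, LinearMap.comp_assoc]

lemma smulRight_ne_zero {V W : Type} [AddCommGroup V] [Module K V] [AddCommGroup W] [Module K W]
    (f : V →ₗ[K] K) (w : W) (hf : f ≠ 0) (hw : w ≠ 0) : f.smulRight w ≠ 0 := by
  obtain ⟨v, hv⟩ := DFunLike.ne_iff.mp hf
  intro h0
  have := DFunLike.congr_fun h0 v
  simp [smul_eq_zero] at this
  tauto

end Helpers

/-- If the only morphism between two finite-dimensional `Λ_con`-modules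
`M = (V₁, V₂, α, β)` and `N = (W₁, W₂, γ, δ)` is zero, then one of the two modules is
filtered by a unique simple module, i.e. at least one of `V₁`, `V₂`, `W₁`, `W₂` is the
zero vector space. -/
theorem orthogonal_lam_modules (K : Type) [Field K] [IsAlgClosed K] (k : ℕ) (hk : 1 ≤ k)
    (M N : LamRep K k)
    (h : ∀ (φ1 : M.V1 →ₗ[K] N.V1) (φ2 : M.V2 →ₗ[K] N.V2),
        M.IsHom N φ1 φ2 → φ1 = 0 ∧ φ2 = 0) :
    Subsingleton M.V1 ∨ Subsingleton M.V2 ∨ Subsingleton N.V1 ∨ Subsingleton N.V2 := by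
  by_contra hcon
  push_neg at hcon
  obtain ⟨h1, h2, h3, h4⟩ := hcon
  -- nilpotency of the four loop maps
  have hαβ : (M.α ∘ₗ M.β) ^ (k + 1) = 0 := by
    rw [comp_pow_succ, ← LinearMap.comp_assoc, M.rel1, LinearMap.zero_comp]
  have hβα : (M.β ∘ₗ M.α) ^ (k + 1) = 0 := by
    rw [pow_succ, Module.End.mul_eq_comp, ← LinearMap.comp_assoc, M.rel2, LinearMap.zero_comp]
  have hγδ : (N.α ∘ₗ N.β) ^ (k + 1) = 0 := by
    rw [comp_pow_succ, ← LinearMap.comp_assoc, N.rel1, LinearMap.zero_comp]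
  have hδγ : (N.β ∘ₗ N.α) ^ (k + 1) = 0 := by
    rw [pow_succ, Module.End.mul_eq_comp, ← LinearMap.comp_assoc, N.rel2, LinearMap.zero_comp]
  by_cases hγ : Function.Injective N.α
  · -- Construction C: φ1 = (f ∘ α) ⊗ w₁, φ2 = f ⊗ γ w₁
    obtain ⟨f, hf0, hf⟩ := exists_dual_comp_eq_zero (M.α ∘ₗ M.β)
      (not_surjective_of_pow_eq_zero (K := K) _ hαβ)
    obtain ⟨w₁, hw0, hwk⟩ := exists_ker_of_pow_eq_zero (K := K) (N.β ∘ₗ N.α) hδγ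
    set φ1 := (f ∘ₗ M.α).smulRight w₁ with hφ1
    set φ2 := f.smulRight (N.α w₁) with hφ2
    have hhom : M.IsHom N φ1 φ2 := by
      constructor
      · ext v
        simp [hφ1, hφ2]
      · ext v
        have e1 : f (M.α (M.β v)) = 0 := DFunLike.congr_fun hf v
        have e2 : N.β (N.α w₁) = 0 := hwk
        simp [hφ1, hφ2, e1, e2]
    obtain ⟨-, e2⟩ := h φ1 φ2 hhom
    exact smulRight_ne_zero f (N.α w₁) hf0
      (fun hz => hw0 (hγ (by simpa using hz))) e2
  · obtain ⟨w, hw0, hwk⟩ : ∃ w, w ≠ 0 ∧ N.α w = 0 := by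
      have : LinearMap.ker N.α ≠ ⊥ := fun e => hγ (LinearMap.ker_eq_bot.mp e)
      obtain ⟨x, hx, hx0⟩ := Submodule.exists_mem_ne_zero_of_ne_bot this
      exact ⟨x, hx0, hx⟩
    by_cases hβ : Function.Surjective M.β
    · by_cases hα : Function.Surjective M.α
      · -- β∘α surjective but nilpotent on nontrivial V1: contradiction
        exact not_surjective_of_pow_eq_zero (K := K) _ hβα (hβ.comp hα)
      · by_cases hδ : Function.Injective N.β
        · -- Construction C': φ2 = (f' ∘ β) ⊗ w₂, φ1 = f' ⊗ δ w₂
          obtain ⟨f, hf0, hf⟩ := exists_dual_comp_eq_zero (M.β ∘ₗ M.α)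
            (not_surjective_of_pow_eq_zero (K := K) _ hβα)
          obtain ⟨w₂, hw20, hw2k⟩ := exists_ker_of_pow_eq_zero (K := K) (N.α ∘ₗ N.β) hγδ
          set φ2 := (f ∘ₗ M.β).smulRight w₂ with hφ2
          set φ1 := f.smulRight (N.β w₂) with hφ1
          have hhom : M.IsHom N φ1 φ2 := by
            constructor
            · ext v
              have e1 : f (M.β (M.α v)) = 0 := DFunLike.congr_fun hf v
              have e2 : N.α (N.β w₂) = 0 := hw2k
              simp [hφ1, hφ2, e1, e2]
            · ext v
              simp [hφ1, hφ2]
          obtain ⟨e1, -⟩ := h φ1 φ2 hhom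
          exact smulRight_ne_zero f (N.β w₂) hf0
            (fun hz => hw20 (hδ (by simpa using hz))) e1
        · -- Construction B: φ2 = g ⊗ w₂, φ1 = 0
          obtain ⟨g, hg0, hg⟩ := exists_dual_comp_eq_zero M.α hα
          obtain ⟨w₂, hw20, hw2k⟩ : ∃ w, w ≠ 0 ∧ N.β w = 0 := by
            have : LinearMap.ker N.β ≠ ⊥ := fun e => hδ (LinearMap.ker_eq_bot.mp e)
            obtain ⟨x, hx, hx0⟩ := Submodule.exists_mem_ne_zero_of_ne_bot this
            exact ⟨x, hx0, hx⟩
          set φ2 := g.smulRight w₂ with hφ2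
          have hhom : M.IsHom N 0 φ2 := by
            constructor
            · ext v
              have e1 : g (M.α v) = 0 := DFunLike.congr_fun hg v
              simp [hφ2, e1]
            · ext v
              simp [hφ2, hw2k]
          obtain ⟨-, e2⟩ := h 0 φ2 hhom
          exact smulRight_ne_zero g w₂ hg0 hw20 e2
    · -- Construction A: φ1 = g ⊗ w, φ2 = 0
      obtain ⟨g, hg0, hg⟩ := exists_dual_comp_eq_zero M.β hβ
      set φ1 := g.smulRight w with hφ1
      have hhom : M.IsHom N φ1 0 := by
        constructor
        · ext v
          simp [hφ1, hwk]
        · ext v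
          have e1 : g (M.β v) = 0 := DFunLike.congr_fun hg v
          simp [hφ1, e1]
      obtain ⟨e1, -⟩ := h φ1 0 hhom
      exact smulRight_ne_zero g w hg0 hw0 e1
end

section
/- Let K be an algebraically closed field and k ≥ 1. If X = (V₁, V₂, α, β) is a finite-dimensional Λ_con-module whose endomorphism space (the K-vector space of morphisms X → X) is one-dimensional, then X is isomorphic as a representation to exactly one of the four modules S₁ = (K, 0, 0, 0), S₂ = (0, K, 0, 0), M₁ = (K, K, id, 0), M₂ = (K, K, 0, id). In particular Λ_con has exactly four bricks. -/
section BrickAux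

open Module LinearMap

variable {K : Type} [Field K]

lemma lmap_zero_of_subsingleton_dom {V W : Type} [AddCommGroup V] [Module K V]
    [AddCommGroup W] [Module K W] [Subsingleton V] (f : V →ₗ[K] W) : f = 0 :=
  LinearMap.ext fun x => by rw [Subsingleton.elim x 0]; simp

lemma lmap_zero_of_subsingleton_cod {V W : Type} [AddCommGroup V] [Module K V]
    [AddCommGroup W] [Module K W] [Subsingleton W] (f : V →ₗ[K] W) : f = 0 :=
  LinearMap.ext fun _ => Subsingleton.elim _ _

lemma exists_dual_one {V : Type} [AddCommGroup V] [Module K V] {v : V} (hv : v ≠ 0) :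
    ∃ g : V →ₗ[K] K, g v = 1 := by
  have hker : LinearMap.ker (LinearMap.toSpanSingleton K V v) = ⊥ := by
    rw [LinearMap.ker_eq_bot]
    intro a b hab
    simp only [LinearMap.toSpanSingleton_apply] at hab
    have h0 : (a - b) • v = 0 := by rw [sub_smul, hab, sub_self]
    rcases smul_eq_zero.mp h0 with h | h
    · exact sub_eq_zero.mp h
    · exact absurd h hv
  obtain ⟨g, hg⟩ := (LinearMap.toSpanSingleton K V v).exists_leftInverse_of_injective hker
  refine ⟨g, ?_⟩
  have := LinearMap.ext_iff.mp hg 1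
  simpa [LinearMap.toSpanSingleton_apply] using this

lemma exists_vanishing_functional {V : Type} [AddCommGroup V] [Module K V]
    (p : Submodule K V) (hp : p ≠ ⊤) :
    ∃ f : V →ₗ[K] K, f ≠ 0 ∧ ∀ x ∈ p, f x = 0 := by
  have : Nontrivial (V ⧸ p) :=
    Submodule.Quotient.nontrivial_iff.mpr hp
  obtain ⟨w, hw⟩ := exists_ne (0 : V ⧸ p)
  obtain ⟨g, hg⟩ := exists_dual_one (K := K) hw
  refine ⟨g ∘ₗ p.mkQ, ?_, ?_⟩
  · intro h0
    obtain ⟨x, hx⟩ := p.mkQ_surjective w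
    have hx0 : g (p.mkQ x) = 0 := by
      have := LinearMap.ext_iff.mp h0 x
      simpa using this
    rw [hx, hg] at hx0
    exact one_ne_zero hx0
  · intro x hx
    have hx0 : p.mkQ x = 0 := (Submodule.Quotient.mk_eq_zero p).mpr hx
    simp [hx0]

lemma allScalar_finrank_one {V : Type} [AddCommGroup V] [Module K V]
    [FiniteDimensional K V] [Nontrivial V]
    (hsc : ∀ f : V →ₗ[K] V, ∃ c : K, f = c • (LinearMap.id : V →ₗ[K] V)) :
    Module.finrank K V = 1 := by
  obtain ⟨v, hv⟩ := exists_ne (0 : V)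
  rw [finrank_eq_one_iff_of_nonzero' v hv]
  intro w
  obtain ⟨g, hg⟩ := exists_dual_one (K := K) hv
  obtain ⟨c, hc⟩ := hsc (g.smulRight w)
  refine ⟨c, ?_⟩
  have := LinearMap.ext_iff.mp hc v
  simpa [hg] using this.symm

end BrickAux

/-- If a finite-dimensional `Λ_con`-module `X` has a one-dimensional endomorphism space,
then `X` is isomorphic to exactly one of the four modules `S₁ = (K, 0, 0, 0)`,
`S₂ = (0, K, 0, 0)`, `M₁ = (K, K, id, 0)`, `M₂ = (K, K, 0, id)`.  In particular
`Λ_con` has exactly four bricks. -/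
theorem lam_bricks (K : Type) [Field K] [IsAlgClosed K] (k : ℕ) (hk : 1 ≤ k)
    (X : LamRep K k) (h : Module.finrank K X.endSpace = 1) :
    ∃! i : Fin 4,
      X.Iso (![LamRep.S1 K, LamRep.S2 K, LamRep.M1 K hk, LamRep.M2 K hk] i) := by
  classical
  -- Step 0: not both V1 and V2 are trivial
  have hnt : Nontrivial X.V1 ∨ Nontrivial X.V2 := by
    by_contra hcon
    push_neg at hcon
    obtain ⟨h1, h2⟩ := hcon
    haveI := h1; haveI := h2
    haveI : Subsingleton (X.V1 →ₗ[K] X.V1) :=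
      ⟨fun f g => by rw [lmap_zero_of_subsingleton_dom f, lmap_zero_of_subsingleton_dom g]⟩
    haveI : Subsingleton (X.V2 →ₗ[K] X.V2) :=
      ⟨fun f g => by rw [lmap_zero_of_subsingleton_dom f, lmap_zero_of_subsingleton_dom g]⟩
    haveI : Subsingleton X.endSpace := inferInstance
    rw [Module.finrank_zero_of_subsingleton] at h
    exact one_ne_zero h.symm
  -- the identity endomorphism
  have hid : X.IsHom X LinearMap.id LinearMap.id := ⟨by simp, by simp⟩
  set e : X.endSpace := ⟨(LinearMap.id, LinearMap.id), hid⟩ with he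
  have hene : e ≠ 0 := by
    intro h0
    have hval : ((LinearMap.id : X.V1 →ₗ[K] X.V1), (LinearMap.id : X.V2 →ₗ[K] X.V2))
        = (0 : (X.V1 →ₗ[K] X.V1) × (X.V2 →ₗ[K] X.V2)) := congrArg Subtype.val h0
    rcases hnt with hn | hn
    · obtain ⟨x, hx⟩ := exists_ne (0 : X.V1)
      have := congrArg (fun p => p.1 x) hval
      exact hx this
    · obtain ⟨x, hx⟩ := exists_ne (0 : X.V2)
      have := congrArg (fun p => p.2 x) hval
      exact hx this
  -- Step 1: every endomorphism is scalar
  have hscalar : ∀ φ1 φ2, X.IsHom X φ1 φ2 →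
      ∃ c : K, φ1 = c • (LinearMap.id : X.V1 →ₗ[K] X.V1) ∧
        φ2 = c • (LinearMap.id : X.V2 →ₗ[K] X.V2) := by
    intro φ1 φ2 hm
    obtain ⟨c, hc⟩ := (finrank_eq_one_iff_of_nonzero' e hene).mp h ⟨(φ1, φ2), hm⟩
    have hval := congrArg Subtype.val hc
    have h1 := congrArg Prod.fst hval
    have h2 := congrArg Prod.snd hval
    exact ⟨c, h1.symm, h2.symm⟩
  -- Step 2: β ∘ α = 0 and α ∘ β = 0
  have hcomm : (X.α ∘ₗ X.β) ∘ₗ X.α = X.α ∘ₗ (X.β ∘ₗ X.α) := LinearMap.ext fun _ => rfl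
  have hba : X.β ∘ₗ X.α = 0 ∧ X.α ∘ₗ X.β = 0 := by
    have hm : X.IsHom X (X.β ∘ₗ X.α) (X.α ∘ₗ X.β) :=
      ⟨LinearMap.ext fun _ => rfl, LinearMap.ext fun _ => rfl⟩
    obtain ⟨c, h1, h2⟩ := hscalar _ _ hm
    have hc0 : c = 0 := by
      rcases hnt with hn | hn
      · -- (βα)^(k+1) = 0
        have hp : (X.β ∘ₗ X.α) ^ (k + 1) = 0 := by
          have : (X.β ∘ₗ X.α) ^ (k + 1) = X.β ∘ₗ (X.α ∘ₗ ((X.β ∘ₗ X.α) ^ k)) := by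
            rw [pow_succ', Module.End.mul_eq_comp, LinearMap.comp_assoc]
          rw [this, X.rel1, LinearMap.comp_zero]
        rw [h1, smul_pow, Module.End.id_pow] at hp
        obtain ⟨x, hx⟩ := exists_ne (0 : X.V1)
        have := LinearMap.ext_iff.mp hp x
        simp only [LinearMap.smul_apply, LinearMap.id_apply, LinearMap.zero_apply] at this
        rcases smul_eq_zero.mp this with hck | hx0
        · exact pow_eq_zero_iff (Nat.succ_ne_zero k) |>.mp hck
        · exact absurd hx0 hx
      · -- (αβ)^(k+1) = 0
        have hswap : ((X.α ∘ₗ X.β) ^ k) ∘ₗ X.α = X.α ∘ₗ ((X.β ∘ₗ X.α) ^ k) :=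
          Module.End.commute_pow_left_of_commute hcomm k
        have hp : (X.α ∘ₗ X.β) ^ (k + 1) = 0 := by
          have h5 : (X.α ∘ₗ X.β) ^ (k + 1)
              = (((X.α ∘ₗ X.β) ^ k) ∘ₗ X.α) ∘ₗ X.β := by
            rw [pow_succ, Module.End.mul_eq_comp, ← LinearMap.comp_assoc]
          rw [h5, hswap, X.rel1, LinearMap.zero_comp]
        rw [h2, smul_pow, Module.End.id_pow] at hp
        obtain ⟨x, hx⟩ := exists_ne (0 : X.V2)
        have := LinearMap.ext_iff.mp hp x
        simp only [LinearMap.smul_apply, LinearMap.id_apply, LinearMap.zero_apply] at this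
        rcases smul_eq_zero.mp this with hck | hx0
        · exact pow_eq_zero_iff (Nat.succ_ne_zero k) |>.mp hck
        · exact absurd hx0 hx
    rw [hc0, zero_smul] at h1 h2
    exact ⟨h1, h2⟩
  obtain ⟨hba0, hab0⟩ := hba
  -- main case analysis
  by_cases hs2 : Subsingleton X.V2
  · -- Case S1
    haveI := hs2
    haveI hn1 : Nontrivial X.V1 := by
      rcases hnt with hn | hn
      · exact hn
      · exact absurd hn (not_nontrivial X.V2)
    have hα0 : X.α = 0 := lmap_zero_of_subsingleton_cod X.α
    have hβ0 : X.β = 0 := lmap_zero_of_subsingleton_dom X.β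
    have hsc1 : ∀ f : X.V1 →ₗ[K] X.V1,
        ∃ c : K, f = c • (LinearMap.id : X.V1 →ₗ[K] X.V1) := by
      intro f
      have hm : X.IsHom X f 0 := by
        constructor
        · rw [hα0]; simp
        · rw [hβ0]; simp
      obtain ⟨c, h1, _⟩ := hscalar _ _ hm
      exact ⟨c, h1⟩
    have hd1 : Module.finrank K X.V1 = 1 := allScalar_finrank_one hsc1
    refine ⟨0, ?_, ?_⟩
    · show X.Iso (LamRep.S1 K)
      haveI : Subsingleton (LamRep.S1 K (k := k)).V2 := inferInstanceAs (Subsingleton PUnit)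
      refine ⟨(LinearEquiv.ofFinrankEq X.V1 K (by rw [hd1, Module.finrank_self]) : X.V1 ≃ₗ[K] K),
        LinearEquiv.ofSubsingleton X.V2 PUnit, ?_, ?_⟩
      · exact lmap_zero_of_subsingleton_cod _ |>.trans (lmap_zero_of_subsingleton_cod _).symm
      · exact lmap_zero_of_subsingleton_dom _ |>.trans (lmap_zero_of_subsingleton_dom _).symm
    · intro j hj
      fin_cases j
      · rfl
      · exfalso
        replace hj : X.Iso (LamRep.S2 K (k := k)) := hj
        obtain ⟨φ1, φ2, _, _⟩ := hj
        haveI : Subsingleton (LamRep.S2 K (k := k)).V1 := inferInstanceAs (Subsingleton PUnit)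
        haveI : Subsingleton X.V1 := Equiv.subsingleton φ1.toEquiv
        exact absurd hn1 (not_nontrivial X.V1)
      · exfalso
        replace hj : X.Iso (LamRep.M1 K hk) := hj
        obtain ⟨φ1, φ2, _, _⟩ := hj
        haveI : Nontrivial (LamRep.M1 K hk).V2 := inferInstanceAs (Nontrivial K)
        haveI h9 : Nontrivial X.V2 := Equiv.nontrivial φ2.toEquiv
        exact absurd h9 (not_nontrivial X.V2)
      · exfalso
        replace hj : X.Iso (LamRep.M2 K hk) := hj
        obtain ⟨φ1, φ2, _, _⟩ := hj
        haveI : Nontrivial (LamRep.M2 K hk).V2 := inferInstanceAs (Nontrivial K)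
        haveI h9 : Nontrivial X.V2 := Equiv.nontrivial φ2.toEquiv
        exact absurd h9 (not_nontrivial X.V2)
  · -- V2 is nontrivial
    haveI hn2 : Nontrivial X.V2 := not_subsingleton_iff_nontrivial.mp hs2
    by_cases hs1 : Subsingleton X.V1
    · -- Case S2
      haveI := hs1
      have hα0 : X.α = 0 := lmap_zero_of_subsingleton_dom X.α
      have hβ0 : X.β = 0 := lmap_zero_of_subsingleton_cod X.β
      have hsc2 : ∀ f : X.V2 →ₗ[K] X.V2,
          ∃ c : K, f = c • (LinearMap.id : X.V2 →ₗ[K] X.V2) := by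
        intro f
        have hm : X.IsHom X 0 f := by
          constructor
          · rw [hα0]; simp
          · rw [hβ0]; simp
        obtain ⟨c, _, h2⟩ := hscalar _ _ hm
        exact ⟨c, h2⟩
      have hd2 : Module.finrank K X.V2 = 1 := allScalar_finrank_one hsc2
      refine ⟨1, ?_, ?_⟩
      · show X.Iso (LamRep.S2 K)
        haveI : Subsingleton (LamRep.S2 K (k := k)).V1 := inferInstanceAs (Subsingleton PUnit)
        refine ⟨LinearEquiv.ofSubsingleton X.V1 PUnit,
          (LinearEquiv.ofFinrankEq X.V2 K (by rw [hd2, Module.finrank_self]) : X.V2 ≃ₗ[K] K), ?_, ?_⟩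
        · exact lmap_zero_of_subsingleton_dom _ |>.trans (lmap_zero_of_subsingleton_dom _).symm
        · exact lmap_zero_of_subsingleton_cod _ |>.trans (lmap_zero_of_subsingleton_cod _).symm
      · intro j hj
        fin_cases j
        · exfalso
          replace hj : X.Iso (LamRep.S1 K (k := k)) := hj
          obtain ⟨φ1, φ2, _, _⟩ := hj
          haveI : Subsingleton (LamRep.S1 K (k := k)).V2 := inferInstanceAs (Subsingleton PUnit)
          haveI : Subsingleton X.V2 := Equiv.subsingleton φ2.toEquiv
          exact absurd hn2 (not_nontrivial X.V2)
        · rfl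
        · exfalso
          replace hj : X.Iso (LamRep.M1 K hk) := hj
          obtain ⟨φ1, φ2, _, _⟩ := hj
          haveI : Nontrivial (LamRep.M1 K hk).V1 := inferInstanceAs (Nontrivial K)
          haveI h9 : Nontrivial X.V1 := Equiv.nontrivial φ1.toEquiv
          exact absurd h9 (not_nontrivial X.V1)
        · exfalso
          replace hj : X.Iso (LamRep.M2 K hk) := hj
          obtain ⟨φ1, φ2, _, _⟩ := hj
          haveI : Nontrivial (LamRep.M2 K hk).V1 := inferInstanceAs (Nontrivial K)
          haveI h9 : Nontrivial X.V1 := Equiv.nontrivial φ1.toEquiv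
          exact absurd h9 (not_nontrivial X.V1)
    · -- both nontrivial
      haveI hn1 : Nontrivial X.V1 := not_subsingleton_iff_nontrivial.mp hs1
      have hrange_a : LinearMap.range X.α ≤ LinearMap.ker X.β :=
        LinearMap.range_le_ker_iff.mpr hba0
      have hrange_b : LinearMap.range X.β ≤ LinearMap.ker X.α :=
        LinearMap.range_le_ker_iff.mpr hab0
      -- dichotomy 1
      have hd1 : LinearMap.ker X.α = ⊥ ∨ LinearMap.range X.β = ⊤ := by
        by_contra hcon
        push_neg at hcon
        obtain ⟨hka, hrb⟩ := hcon
        obtain ⟨x, hxmem, hx0⟩ := (Submodule.ne_bot_iff _).mp hka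
        obtain ⟨f, hf0, hfv⟩ := exists_vanishing_functional (LinearMap.range X.β) hrb
        have hm : X.IsHom X (f.smulRight x) 0 := by
          constructor
          · refine LinearMap.ext fun v => ?_
            simp only [LinearMap.comp_apply, LinearMap.zero_apply, LinearMap.zero_comp,
              LinearMap.smulRight_apply, map_smul]
            rw [LinearMap.mem_ker.mp hxmem, smul_zero]
          · refine LinearMap.ext fun w => ?_
            simp only [LinearMap.comp_apply, LinearMap.zero_apply, LinearMap.comp_zero,
              LinearMap.smulRight_apply, map_zero]
            rw [hfv (X.β w) (LinearMap.mem_range_self X.β w), zero_smul]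
        obtain ⟨c, h1, h2⟩ := hscalar _ _ hm
        have hc0 : c = 0 := by
          obtain ⟨y, hy⟩ := exists_ne (0 : X.V2)
          have h3 := LinearMap.ext_iff.mp h2 y
          simp only [LinearMap.zero_apply, LinearMap.smul_apply, LinearMap.id_apply] at h3
          rcases smul_eq_zero.mp h3.symm with hc | hy0
          · exact hc
          · exact absurd hy0 hy
        rw [hc0, zero_smul] at h1
        obtain ⟨v, hv⟩ := DFunLike.ne_iff.mp hf0
        have h4 := LinearMap.ext_iff.mp h1 v
        simp only [LinearMap.smulRight_apply, LinearMap.zero_apply] at h4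
        rcases smul_eq_zero.mp h4 with hfv0 | hx00
        · exact hv (by simpa using hfv0)
        · exact hx0 hx00
      -- dichotomy 2
      have hd2 : LinearMap.ker X.β = ⊥ ∨ LinearMap.range X.α = ⊤ := by
        by_contra hcon
        push_neg at hcon
        obtain ⟨hkb, hra⟩ := hcon
        obtain ⟨y, hymem, hy0⟩ := (Submodule.ne_bot_iff _).mp hkb
        obtain ⟨f, hf0, hfv⟩ := exists_vanishing_functional (LinearMap.range X.α) hra
        have hm : X.IsHom X 0 (f.smulRight y) := by
          constructor
          · refine LinearMap.ext fun v => ?_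
            simp only [LinearMap.comp_apply, LinearMap.zero_apply, LinearMap.comp_zero,
              LinearMap.smulRight_apply, map_zero]
            rw [hfv (X.α v) (LinearMap.mem_range_self X.α v), zero_smul]
          · refine LinearMap.ext fun w => ?_
            simp only [LinearMap.comp_apply, LinearMap.zero_apply, LinearMap.zero_comp,
              LinearMap.smulRight_apply, map_smul]
            rw [LinearMap.mem_ker.mp hymem, smul_zero]
        obtain ⟨c, h1, h2⟩ := hscalar _ _ hm
        have hc0 : c = 0 := by
          obtain ⟨x, hx⟩ := exists_ne (0 : X.V1)
          have h3 := LinearMap.ext_iff.mp h1 x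
          simp only [LinearMap.zero_apply, LinearMap.smul_apply, LinearMap.id_apply] at h3
          rcases smul_eq_zero.mp h3.symm with hc | hx0
          · exact hc
          · exact absurd hx0 hx
        rw [hc0, zero_smul] at h2
        obtain ⟨v, hv⟩ := DFunLike.ne_iff.mp hf0
        have h4 := LinearMap.ext_iff.mp h2 v
        simp only [LinearMap.smulRight_apply, LinearMap.zero_apply] at h4
        rcases smul_eq_zero.mp h4 with hfv0 | hy00
        · exact hv (by simpa using hfv0)
        · exact hy0 hy00
      rcases hd1 with hkα | hrβ
      · rcases hd2 with hkβ | hrα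
        · -- impossible: both injective
          exfalso
          have hb0 : X.β = 0 :=
            LinearMap.range_eq_bot.mp (le_bot_iff.mp (hkα ▸ hrange_b))
          rw [hb0, LinearMap.ker_zero] at hkβ
          obtain ⟨y, hy⟩ := exists_ne (0 : X.V2)
          have : y ∈ (⊥ : Submodule K X.V2) := hkβ ▸ Submodule.mem_top
          exact hy ((Submodule.mem_bot K).mp this)
        · -- Case M1 : α bijective, β = 0
          have hβ0 : X.β = 0 :=
            LinearMap.ker_eq_top.mp (eq_top_iff.mpr (hrα ▸ hrange_a))
          have hbij : Function.Bijective X.α :=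
            ⟨LinearMap.ker_eq_bot.mp hkα, LinearMap.range_eq_top.mp hrα⟩
          set eα : X.V1 ≃ₗ[K] X.V2 := LinearEquiv.ofBijective X.α hbij with heα
          have hsc1 : ∀ f : X.V1 →ₗ[K] X.V1,
              ∃ c : K, f = c • (LinearMap.id : X.V1 →ₗ[K] X.V1) := by
            intro f
            have hm : X.IsHom X f (X.α ∘ₗ (f ∘ₗ (eα.symm : X.V2 →ₗ[K] X.V1))) := by
              constructor
              · refine LinearMap.ext fun v => ?_
                have hx : eα.symm (X.α v) = v := eα.symm_apply_apply v
                simp only [LinearMap.comp_apply, LinearEquiv.coe_coe, hx]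
              · rw [hβ0]; simp
            obtain ⟨c, h1, _⟩ := hscalar _ _ hm
            exact ⟨c, h1⟩
          have hdim1 : Module.finrank K X.V1 = 1 := allScalar_finrank_one hsc1
          refine ⟨2, ?_, ?_⟩
          · show X.Iso (LamRep.M1 K hk)
            set φ1 : X.V1 ≃ₗ[K] K :=
              LinearEquiv.ofFinrankEq X.V1 K (by rw [hdim1, Module.finrank_self]) with hφ1
            refine ⟨φ1, eα.symm.trans φ1, ?_, ?_⟩
            · show ((eα.symm.trans φ1 : X.V2 →ₗ[K] K)) ∘ₗ X.α
                = (LinearMap.id : K →ₗ[K] K) ∘ₗ (φ1 : X.V1 →ₗ[K] K)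
              refine LinearMap.ext fun v => ?_
              have hx : eα.symm (X.α v) = v := eα.symm_apply_apply v
              simp only [LinearMap.comp_apply, LinearEquiv.coe_coe, LinearEquiv.trans_apply,
                LinearMap.id_apply, hx]
            · show (φ1 : X.V1 →ₗ[K] K) ∘ₗ X.β
                = (0 : K →ₗ[K] K) ∘ₗ ((eα.symm.trans φ1 : X.V2 →ₗ[K] K))
              rw [hβ0]
              simp
          · intro j hj
            fin_cases j
            · exfalso
              replace hj : X.Iso (LamRep.S1 K (k := k)) := hj
              obtain ⟨ψ1, ψ2, _, _⟩ := hj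
              haveI : Subsingleton (LamRep.S1 K (k := k)).V2 := inferInstanceAs (Subsingleton PUnit)
              haveI : Subsingleton X.V2 := Equiv.subsingleton ψ2.toEquiv
              exact absurd hn2 (not_nontrivial X.V2)
            · exfalso
              replace hj : X.Iso (LamRep.S2 K (k := k)) := hj
              obtain ⟨ψ1, ψ2, _, _⟩ := hj
              haveI : Subsingleton (LamRep.S2 K (k := k)).V1 := inferInstanceAs (Subsingleton PUnit)
              haveI : Subsingleton X.V1 := Equiv.subsingleton ψ1.toEquiv
              exact absurd hn1 (not_nontrivial X.V1)
            · rfl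
            · exfalso
              replace hj : X.Iso (LamRep.M2 K hk) := hj
              obtain ⟨ψ1, ψ2, hc1, hc2⟩ := hj
              obtain ⟨x, hx⟩ := exists_ne (0 : X.V1)
              have h3 := LinearMap.ext_iff.mp hc1 x
              have h5 : ψ2 (X.α x) = 0 := by
                refine Eq.trans (by rfl) (h3.trans ?_)
                rfl
              have h6 : X.α x = 0 := by
                apply ψ2.injective
                rw [map_zero]
                exact h5
              have h7 : x = 0 := LinearMap.ker_eq_bot.mp hkα (h6.trans (map_zero X.α).symm)
              exact hx h7
      · -- β surjective
        rcases hd2 with hkβ | hrα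
        · -- Case M2 : β bijective, α = 0
          have hα0 : X.α = 0 :=
            LinearMap.ker_eq_top.mp (eq_top_iff.mpr (hrβ ▸ hrange_b))
          have hbij : Function.Bijective X.β :=
            ⟨LinearMap.ker_eq_bot.mp hkβ, LinearMap.range_eq_top.mp hrβ⟩
          set eβ : X.V2 ≃ₗ[K] X.V1 := LinearEquiv.ofBijective X.β hbij with heβ
          have hsc2 : ∀ f : X.V2 →ₗ[K] X.V2,
              ∃ c : K, f = c • (LinearMap.id : X.V2 →ₗ[K] X.V2) := by
            intro f
            have hm : X.IsHom X (X.β ∘ₗ (f ∘ₗ (eβ.symm : X.V1 →ₗ[K] X.V2))) f := by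
              constructor
              · rw [hα0]; simp
              · refine LinearMap.ext fun v => ?_
                have hx : eβ.symm (X.β v) = v := eβ.symm_apply_apply v
                simp only [LinearMap.comp_apply, LinearEquiv.coe_coe, hx]
            obtain ⟨c, _, h2⟩ := hscalar _ _ hm
            exact ⟨c, h2⟩
          have hdim2 : Module.finrank K X.V2 = 1 := allScalar_finrank_one hsc2
          refine ⟨3, ?_, ?_⟩
          · show X.Iso (LamRep.M2 K hk)
            set φ2 : X.V2 ≃ₗ[K] K :=
              LinearEquiv.ofFinrankEq X.V2 K (by rw [hdim2, Module.finrank_self]) with hφ2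
            refine ⟨eβ.symm.trans φ2, φ2, ?_, ?_⟩
            · show ((φ2 : X.V2 →ₗ[K] K)) ∘ₗ X.α
                = (0 : K →ₗ[K] K) ∘ₗ ((eβ.symm.trans φ2 : X.V1 →ₗ[K] K))
              rw [hα0]
              simp
            · show ((eβ.symm.trans φ2 : X.V1 →ₗ[K] K)) ∘ₗ X.β
                = (LinearMap.id : K →ₗ[K] K) ∘ₗ (φ2 : X.V2 →ₗ[K] K)
              refine LinearMap.ext fun v => ?_
              have hx : eβ.symm (X.β v) = v := eβ.symm_apply_apply v
              simp only [LinearMap.comp_apply, LinearEquiv.coe_coe, LinearEquiv.trans_apply,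
                LinearMap.id_apply, hx]
          · intro j hj
            fin_cases j
            · exfalso
              replace hj : X.Iso (LamRep.S1 K (k := k)) := hj
              obtain ⟨ψ1, ψ2, _, _⟩ := hj
              haveI : Subsingleton (LamRep.S1 K (k := k)).V2 :=
                inferInstanceAs (Subsingleton PUnit)
              haveI : Subsingleton X.V2 := Equiv.subsingleton ψ2.toEquiv
              exact absurd hn2 (not_nontrivial X.V2)
            · exfalso
              replace hj : X.Iso (LamRep.S2 K (k := k)) := hj
              obtain ⟨ψ1, ψ2, _, _⟩ := hj
              haveI : Subsingleton (LamRep.S2 K (k := k)).V1 :=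
                inferInstanceAs (Subsingleton PUnit)
              haveI : Subsingleton X.V1 := Equiv.subsingleton ψ1.toEquiv
              exact absurd hn1 (not_nontrivial X.V1)
            · exfalso
              replace hj : X.Iso (LamRep.M1 K hk) := hj
              obtain ⟨ψ1, ψ2, hc1, hc2⟩ := hj
              obtain ⟨x, hx⟩ := exists_ne (0 : X.V1)
              have h3 := LinearMap.ext_iff.mp hc1 x
              have h5 : (ψ1 x : K) = 0 := by
                refine Eq.trans ?_ (Eq.trans h3.symm ?_)
                · rfl
                · show ψ2 (X.α x) = 0
                  rw [hα0]
                  simp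
              have h7 : x = 0 := by
                apply ψ1.injective
                rw [map_zero]
                exact h5
              exact hx h7
            · rfl
        · -- impossible: both surjective
          exfalso
          have hα0 : X.α = 0 :=
            LinearMap.ker_eq_top.mp (eq_top_iff.mpr (hrβ ▸ hrange_b))
          rw [hα0, LinearMap.range_zero] at hrα
          obtain ⟨y, hy⟩ := exists_ne (0 : X.V2)
          have : y ∈ (⊥ : Submodule K X.V2) := hrα ▸ Submodule.mem_top
          exact hy ((Submodule.mem_bot K).mp this)
end

section
/- Let K be an algebraically closed field and k ≥ 1. If X = (V₁, V₂, α, β) and Y = (W₁, W₂, γ, δ) are indecomposable finite-dimensional Λ_con-modules neither of which is simple (equivalently, all four vector spaces V₁, V₂, W₁, W₂ are nonzero), then there exists a nonzero morphism of representations X → Y. -/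
section AuxLemmas

variable {K : Type} [Field K] {V W : Type} [AddCommGroup V] [Module K V]
  [AddCommGroup W] [Module K W]

/-- A nilpotent endomorphism of a nontrivial space has a nonzero kernel element. -/
theorem exists_ne_zero_map_eq_zero [Nontrivial V] (f : V →ₗ[K] V) {n : ℕ}
    (hf : f ^ n = 0) : ∃ v : V, v ≠ 0 ∧ f v = 0 := by
  by_contra h
  push_neg at h
  have hinj : Function.Injective f := by
    intro x y hxy
    by_contra hne
    exact h (x - y) (sub_ne_zero.mpr hne) (by rw [map_sub, hxy, sub_self])
  have hinjn : Function.Injective (f ^ n) := by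
    rw [Module.End.coe_pow]
    exact hinj.iterate n
  obtain ⟨x, hx⟩ := exists_ne (0 : V)
  exact hx (hinjn (by simp [hf]))

theorem comp_pow_comp (α : V →ₗ[K] W) (β : W →ₗ[K] V) (n : ℕ) :
    (α ∘ₗ β) ^ (n + 1) = α ∘ₗ (((β ∘ₗ α) ^ n) ∘ₗ β) := by
  induction n with
  | zero => rw [pow_zero, pow_one]; ext v; simp [Module.End.one_apply]
  | succ n ih =>
    rw [pow_succ, Module.End.mul_eq_comp, ih, pow_succ, Module.End.mul_eq_comp]
    ext v
    simp [LinearMap.comp_apply]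

/-- The linear equivalence `V ≃ V × PUnit`. -/
def prodPUnitEquiv : V ≃ₗ[K] V × PUnit :=
  LinearEquiv.ofLinear (LinearMap.prod LinearMap.id 0) (LinearMap.fst K V PUnit)
    (by ext v <;> simp) (by ext v; simp)

/-- The linear equivalence `V ≃ PUnit × V`. -/
def punitProdEquiv : V ≃ₗ[K] PUnit × V :=
  LinearEquiv.ofLinear (LinearMap.prod 0 LinearMap.id) (LinearMap.snd K PUnit V)
    (by ext v <;> simp) (by ext v; simp)

end AuxLemmas

/-- If `X` and `Y` are indecomposable finite-dimensional `Λ_con`-modules neither of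
which is simple (equivalently, all four underlying vector spaces are nonzero), then there
is a nonzero morphism of representations `X → Y`. -/
theorem nonzero_hom_between_nonsimple_indecomposables (K : Type) [Field K] [IsAlgClosed K]
    (k : ℕ) (hk : 1 ≤ k) (X Y : LamRep K k)
    (hX : X.Indecomposable) (hY : Y.Indecomposable)
    (hX1 : Nontrivial X.V1) (hX2 : Nontrivial X.V2)
    (hY1 : Nontrivial Y.V1) (hY2 : Nontrivial Y.V2) :
    ∃ (φ1 : X.V1 →ₗ[K] Y.V1) (φ2 : X.V2 →ₗ[K] Y.V2),
      X.IsHom Y φ1 φ2 ∧ ¬ (φ1 = 0 ∧ φ2 = 0) := by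
  classical
  -- Nilpotency of the composites in Y.
  have hYβα : (Y.β ∘ₗ Y.α) ^ (k + 1) = 0 := by
    rw [pow_succ, Module.End.mul_eq_comp, ← LinearMap.comp_assoc, Y.rel2,
      LinearMap.zero_comp]
  have hYαβ : (Y.α ∘ₗ Y.β) ^ (k + 1) = 0 := by
    rw [comp_pow_comp, ← LinearMap.comp_assoc, Y.rel1, LinearMap.zero_comp]
  have hXαβ : (X.α ∘ₗ X.β) ^ (k + 1) = 0 := by
    rw [comp_pow_comp, ← LinearMap.comp_assoc, X.rel1, LinearMap.zero_comp]
  have hXβα : (X.β ∘ₗ X.α) ^ (k + 1) = 0 := by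
    rw [pow_succ, Module.End.mul_eq_comp, ← LinearMap.comp_assoc, X.rel2,
      LinearMap.zero_comp]
  by_cases hA : LinearMap.range X.α ≤ LinearMap.range (X.α ∘ₗ X.β)
  · by_cases hB : LinearMap.range X.β ≤ LinearMap.range (X.β ∘ₗ X.α)
    · -- Then α = 0 and β = 0 and X decomposes, contradicting indecomposability.
      exfalso
      have h0α : LinearMap.range X.α ≤
          Submodule.map (X.α ∘ₗ X.β) (LinearMap.range X.α) := by
        calc LinearMap.range X.α ≤ LinearMap.range (X.α ∘ₗ X.β) := hA
        _ = Submodule.map X.α (LinearMap.range X.β) := LinearMap.range_comp _ _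
        _ ≤ Submodule.map X.α (Submodule.map X.β (LinearMap.range X.α)) := by
            refine Submodule.map_mono ?_
            calc LinearMap.range X.β ≤ LinearMap.range (X.β ∘ₗ X.α) := hB
            _ = Submodule.map X.β (LinearMap.range X.α) := LinearMap.range_comp _ _
        _ = Submodule.map (X.α ∘ₗ X.β) (LinearMap.range X.α) :=
            (Submodule.map_comp _ _ _).symm
      have h0β : LinearMap.range X.β ≤
          Submodule.map (X.β ∘ₗ X.α) (LinearMap.range X.β) := by
        calc LinearMap.range X.β ≤ LinearMap.range (X.β ∘ₗ X.α) := hB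
        _ = Submodule.map X.β (LinearMap.range X.α) := LinearMap.range_comp _ _
        _ ≤ Submodule.map X.β (Submodule.map X.α (LinearMap.range X.β)) := by
            refine Submodule.map_mono ?_
            calc LinearMap.range X.α ≤ LinearMap.range (X.α ∘ₗ X.β) := hA
            _ = Submodule.map X.α (LinearMap.range X.β) := LinearMap.range_comp _ _
        _ = Submodule.map (X.β ∘ₗ X.α) (LinearMap.range X.β) :=
            (Submodule.map_comp _ _ _).symm
      have key : ∀ {V₁ V₂ : Type} [AddCommGroup V₁] [Module K V₁] [AddCommGroup V₂]
          [Module K V₂] (a : V₁ →ₗ[K] V₂) (b : V₂ →ₗ[K] V₁),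
          ((a ∘ₗ b) ^ (k + 1) = 0) →
          LinearMap.range a ≤ Submodule.map (a ∘ₗ b) (LinearMap.range a) → a = 0 := by
        intro V₁ V₂ _ _ _ _ a b hnil hle
        have step : ∀ n : ℕ, LinearMap.range a ≤
            Submodule.map ((a ∘ₗ b) ^ n) (LinearMap.range a) := by
          intro n
          induction n with
          | zero => rw [pow_zero, Module.End.one_eq_id, Submodule.map_id]
          | succ n ih =>
            calc LinearMap.range a ≤
                Submodule.map (a ∘ₗ b) (LinearMap.range a) := hle
            _ ≤ Submodule.map (a ∘ₗ b)
                (Submodule.map ((a ∘ₗ b) ^ n) (LinearMap.range a)) :=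
                Submodule.map_mono ih
            _ = Submodule.map ((a ∘ₗ b) ^ (n + 1)) (LinearMap.range a) := by
                simp only [pow_succ', Module.End.mul_eq_comp, Submodule.map_comp]
        have := step (k + 1)
        rw [hnil] at this
        rw [← LinearMap.range_eq_bot]
        simpa [Submodule.map_zero] using this
      have hα0 : X.α = 0 := key X.α X.β hXαβ h0α
      have hβ0 : X.β = 0 := key X.β X.α hXβα h0β
      -- Decompose X.
      rcases hX.2
        { V1 := X.V1, V2 := PUnit, α := 0, β := 0,
          rel1 := by rw [LinearMap.zero_comp], rel2 := by rw [LinearMap.comp_zero] }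
        { V1 := PUnit, V2 := X.V2, α := 0, β := 0,
          rel1 := by rw [LinearMap.zero_comp], rel2 := by rw [LinearMap.comp_zero] }
        ⟨prodPUnitEquiv, punitProdEquiv, by
          constructor <;> · ext v <;>
            simp [LamRep.dsum, hα0, hβ0, prodPUnitEquiv, punitProdEquiv] <;> rfl⟩
        with h | h
      · exact (not_subsingleton X.V1) h.1
      · exact (not_subsingleton X.V2) h.2
    · -- Family 2: a hom supported on a functional through β.
      rw [SetLike.not_le_iff_exists] at hB
      obtain ⟨v, hv, hv'⟩ := hB
      obtain ⟨g, hgv, hgmap⟩ :=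
        (LinearMap.range (X.β ∘ₗ X.α)).exists_dual_map_eq_bot_of_notMem hv' inferInstance
      obtain ⟨u, hu0, hu⟩ := exists_ne_zero_map_eq_zero (Y.α ∘ₗ Y.β) hYαβ
      have hg0 : ∀ x, g ((X.β ∘ₗ X.α) x) = 0 := by
        intro x
        have : g ((X.β ∘ₗ X.α) x) ∈
            Submodule.map g (LinearMap.range (X.β ∘ₗ X.α)) :=
          Submodule.mem_map_of_mem (LinearMap.mem_range_self _ x)
        rw [hgmap] at this
        exact (Submodule.mem_bot K).mp this
      refine ⟨g.smulRight (Y.β u), (g ∘ₗ X.β).smulRight u, ⟨?_, ?_⟩, ?_⟩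
      · ext x
        have h1 : g (X.β (X.α x)) = 0 := hg0 x
        have h2 : Y.α (Y.β u) = 0 := hu
        simp [LinearMap.smulRight_apply, h1, h2]
      · ext x
        simp [LinearMap.smulRight_apply]
      · rintro ⟨-, h2⟩
        obtain ⟨x, hx⟩ := hv
        have : ((g ∘ₗ X.β).smulRight u) x = 0 := by rw [h2]; rfl
        rw [LinearMap.smulRight_apply] at this
        rcases smul_eq_zero.mp this with h | h
        · exact hgv (by simpa [hx] using h)
        · exact hu0 h
  · -- Family 1: a hom supported on a functional through α.
    rw [SetLike.not_le_iff_exists] at hA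
    obtain ⟨v, hv, hv'⟩ := hA
    obtain ⟨f, hfv, hfmap⟩ :=
      (LinearMap.range (X.α ∘ₗ X.β)).exists_dual_map_eq_bot_of_notMem hv' inferInstance
    obtain ⟨w, hw0, hw⟩ := exists_ne_zero_map_eq_zero (Y.β ∘ₗ Y.α) hYβα
    have hf0 : ∀ x, f ((X.α ∘ₗ X.β) x) = 0 := by
      intro x
      have : f ((X.α ∘ₗ X.β) x) ∈
          Submodule.map f (LinearMap.range (X.α ∘ₗ X.β)) :=
        Submodule.mem_map_of_mem (LinearMap.mem_range_self _ x)
      rw [hfmap] at this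
      exact (Submodule.mem_bot K).mp this
    refine ⟨(f ∘ₗ X.α).smulRight w, f.smulRight (Y.α w), ⟨?_, ?_⟩, ?_⟩
    · ext x
      simp [LinearMap.smulRight_apply]
    · ext x
      have h1 : f (X.α (X.β x)) = 0 := hf0 x
      have h2 : Y.β (Y.α w) = 0 := hw
      simp [LinearMap.smulRight_apply, h1, h2]
    · rintro ⟨h1, -⟩
      obtain ⟨x, hx⟩ := hv
      have : ((f ∘ₗ X.α).smulRight w) x = 0 := by rw [h1]; rfl
      rw [LinearMap.smulRight_apply] at this
      rcases smul_eq_zero.mp this with h | h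
      · exact hfv (by simpa [hx] using h)
      · exact hw0 h
end
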